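/- Let D₊, D₋, H, S, p₀, pₙ, x form a pair of SBP operators of order q on [a,b]. Then S xʲ = 0 for every j = 0, …, q, where xʲ denotes the elementwise j-th power of x. -/
import Mathlib


open Matrix

/-- A pair of SBP operators of order `q` on `[a,b]`:
(A) accuracy conditions, (B) `H` symmetric positive definite,
(C) `H D₊ + D₊ᵀ H = -p₀ p₀ᵀ + pₙ pₙᵀ + S` with `S` symmetric positive semidefinite,
(D) `H D₊ + D₋ᵀ H = -p₀ p₀ᵀ + pₙ pₙᵀ`, (E) the grid points are pairwise distinct. -/
def IsSBP (n q : ℕ) (a b : ℝ)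
    (Dp Dm H S : Matrix (Fin (n+1)) (Fin (n+1)) ℝ)
    (p0 pn x : Fin (n+1) → ℝ) : Prop :=
  (∀ j : ℕ, j ≤ q → Dp.mulVec (fun i => x i ^ j) = fun i => (j : ℝ) * x i ^ (j - 1)) ∧
  (∀ j : ℕ, j ≤ q → Dm.mulVec (fun i => x i ^ j) = fun i => (j : ℝ) * x i ^ (j - 1)) ∧
  (∀ j : ℕ, j ≤ q → p0 ⬝ᵥ (fun i => x i ^ j) = a ^ j) ∧
  (∀ j : ℕ, j ≤ q → pn ⬝ᵥ (fun i => x i ^ j) = b ^ j) ∧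
  H.PosDef ∧ S.PosSemidef ∧
  H * Dp + Dpᵀ * H = -(vecMulVec p0 p0) + vecMulVec pn pn + S ∧
  H * Dp + Dmᵀ * H = -(vecMulVec p0 p0) + vecMulVec pn pn ∧
  Function.Injective x

/-- `S xʲ = 0` for `j = 0, …, q`. -/
theorem sbp_S_annihilates_grid_powers {n q : ℕ} (hn : 1 ≤ n) (hq : 1 ≤ q) {a b : ℝ} (hab : a < b)
    (Dp Dm H S : Matrix (Fin (n+1)) (Fin (n+1)) ℝ) (p0 pn x : Fin (n+1) → ℝ)
    (hsbp : IsSBP n q a b Dp Dm H S p0 pn x) :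
    ∀ j : ℕ, j ≤ q → S.mulVec (fun i => x i ^ j) = 0 := by
  obtain ⟨hA1, hA2, _, _, hH, hS, hC, hD, _⟩ := hsbp
  intro j hj
  have hSeq : S = Dpᵀ * H - Dmᵀ * H := by
    have h : (H * Dp + Dpᵀ * H) - (H * Dp + Dmᵀ * H) = (-vecMulVec p0 p0 + vecMulVec pn pn + S) - (-vecMulVec p0 p0 + vecMulVec pn pn) := by rw [hC, hD]
    rw [add_sub_add_left_eq_sub] at h
    rw [h]; abel
  have hHsym : Hᵀ = H := hH.1.eq
  have hSsym : Sᵀ = S := hS.1.eq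
  have hST : S = H * Dp - H * Dm := by
    calc S = Sᵀ := hSsym.symm
    _ = (Dpᵀ * H - Dmᵀ * H)ᵀ := by rw [← hSeq]
    _ = H * Dp - H * Dm := by
        rw [Matrix.transpose_sub, Matrix.transpose_mul, Matrix.transpose_mul,
          Matrix.transpose_transpose, Matrix.transpose_transpose, hHsym]
  rw [hST, Matrix.sub_mulVec, ← Matrix.mulVec_mulVec, ← Matrix.mulVec_mulVec,
    hA1 j hj, hA2 j hj, sub_self]
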